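/- Let ν be the optimal value function of the shifted problems and θ the dual function. Then: (a) θ(λ) = ν*(λ) for all λ ∈ Y, and ν**(s) = θ*(s) for all s ∈ Y; (b) if ν is proper (ν(s) > −∞ for all s ∈ S and ν(ŝ) < +∞ for some ŝ ∈ S), then θ and ν** are proper lower semi-continuous convex functions; (c) if ν is a proper lower semi-continuous function, then ν(s) = ν**(s) = θ*(s) for every s ∈ Y. -/

import Mathlib

open Set Filter Topology Bornology Metric
open scoped RealInnerProductSpace

noncomputable section

variable {E : Type*} [NormedAddCommGroup E] [InnerProductSpace ℝ E]
variable {Y : Type*} [NormedAddCommGroup Y] [InnerProductSpace ℝ Y]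

/-- The set of feasible shifts `S = {s | ∃ x, g x + s ∈ K}`. -/
def feasShifts (g : E → Y) (K : Set Y) : Set Y := {s | ∃ x, g x + s ∈ K}

/-- The graph of the set-valued mapping `G_K(x) = -g(x) + K`,
i.e. `{(x, y) | g x + y ∈ K}`. -/
def gphGK (g : E → Y) (K : Set Y) : Set (E × Y) := {p | g p.1 + p.2 ∈ K}

/-- Recession cone of a convex set. -/
def recCone {Z : Type*} [AddCommGroup Z] [Module ℝ Z] (C : Set Z) : Set Z :=
  {d | ∀ z ∈ C, ∀ t : ℝ, 0 ≤ t → z + t • d ∈ C}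

/-- Horizon (recession) function of a finite-valued function `f`. -/
def horizonFn (f : E → ℝ) (h : E) : EReal :=
  ⨆ t : {t : ℝ // 0 < t}, (((f ((t : ℝ) • h) - f 0) / (t : ℝ) : ℝ) : EReal)

/-- The optimal value function `ν(s) = inf {f x : g x + s ∈ K}` of the shifted problem. -/
def valFn (f : E → ℝ) (g : E → Y) (K : Set Y) (s : Y) : EReal :=
  sInf ((fun x => (f x : EReal)) '' {x | g x + s ∈ K})

/-- The solution set `X(s)` of the shifted problem. -/
def solSet (f : E → ℝ) (g : E → Y) (K : Set Y) (s : Y) : Set E :=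
  {x | g x + s ∈ K ∧ ∀ x', g x' + s ∈ K → f x ≤ f x'}

/-- The Lagrangian `l(x,y,λ) = f x + ⟨λ, g x - y⟩`. -/
def lagr (f : E → ℝ) (g : E → Y) (x : E) (y : Y) (l : Y) : ℝ :=
  f x + ⟪l, g x - y⟫

/-- The augmented Lagrangian `l_r(x,y,λ) = f x + ⟨λ, g x - y⟩ + (r/2)‖g x - y‖²`. -/
def auglagr (f : E → ℝ) (g : E → Y) (r : ℝ) (x : E) (y : Y) (l : Y) : ℝ :=
  f x + ⟪l, g x - y⟫ + r / 2 * ‖g x - y‖ ^ 2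

/-- The dual function `θ(λ) = - inf {l(x,y,λ) : x ∈ ℝⁿ, y ∈ K}`. -/
def dualFn (f : E → ℝ) (g : E → Y) (K : Set Y) (l : Y) : EReal :=
  - sInf ((fun p : E × Y => ((lagr f g p.1 p.2 l : ℝ) : EReal)) '' {p | p.2 ∈ K})

/-- Fenchel conjugate of an extended-real-valued function. -/
def econj (h : Y → EReal) (l : Y) : EReal := ⨆ s : Y, (⟪l, s⟫ : EReal) - h s

/-- Convex subdifferential of an extended-real-valued function. -/
def esubdiff (h : Y → EReal) (s : Y) : Set Y :=
  {l | ∀ s', h s + (⟪l, s' - s⟫ : EReal) ≤ h s'}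

/-- Convexity of an extended-real-valued function, via its epigraph. -/
def ERealConvexOn (h : Y → EReal) : Prop :=
  Convex ℝ {p : Y × ℝ | h p.1 ≤ (p.2 : EReal)}

/-- Properness of an extended-real-valued function. -/
def ERealProper (h : Y → EReal) : Prop := (∀ s, h s ≠ ⊥) ∧ ∃ s, h s ≠ ⊤

/-- The optimal value `val(D(s)) = sup_λ [⟨s,λ⟩ - θ(λ)]` of the dual problem `D(s)`. -/
def dualVal (f : E → ℝ) (g : E → Y) (K : Set Y) (s : Y) : EReal :=
  ⨆ l : Y, (⟪s, l⟫ : EReal) - dualFn f g K l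

/-- The solution set `Sol(D(s))` of the dual problem `D(s)`. -/
def dualSol (f : E → ℝ) (g : E → Y) (K : Set Y) (s : Y) : Set Y :=
  {l | ∀ l', (⟪s, l'⟫ : EReal) - dualFn f g K l' ≤ (⟪s, l⟫ : EReal) - dualFn f g K l}

/-- The set of proximal points `argmin_{λ'} [h(λ') + ‖λ' - λ‖²/(2r)]`. -/
def proxSet (h : Y → EReal) (r : ℝ) (l : Y) : Set Y :=
  {m | ∀ m', h m + ((‖m - l‖ ^ 2 / (2 * r) : ℝ) : EReal) ≤
      h m' + ((‖m' - l‖ ^ 2 / (2 * r) : ℝ) : EReal)}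

/-- The Moreau–Yosida regularization `h_r(λ) = inf_{λ'} [h(λ') + ‖λ' - λ‖²/(2r)]`. -/
def moreau (h : Y → EReal) (r : ℝ) (l : Y) : EReal :=
  ⨅ m : Y, (h m + ((‖m - l‖ ^ 2 / (2 * r) : ℝ) : EReal))


namespace PfAux


lemma exists_real_eq {x : EReal} (h1 : x ≠ ⊥) (h2 : x ≠ ⊤) : ∃ r : ℝ, x = (r : EReal) :=
  ⟨x.toReal, (EReal.coe_toReal h2 h1).symm⟩

lemma eq_bot_of_forall_le {x : EReal} (a : ℝ) (h : ∀ n : ℕ, x ≤ ((a - n : ℝ):EReal)) : x = ⊥ := by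
  by_contra hx
  have h2 : ∃ r : ℝ, (r:EReal) ≤ x := by
    rcases eq_or_ne x ⊤ with rfl | hT
    · exact ⟨0, le_top⟩
    · obtain ⟨r, hr⟩ := exists_real_eq hx hT
      exact ⟨r, le_of_eq hr.symm⟩
  obtain ⟨r, hr⟩ := h2
  obtain ⟨n, hn⟩ := exists_nat_gt (a - r)
  have := hr.trans (h n)
  rw [EReal.coe_le_coe_iff] at this
  linarith

variable {Z : Type*} [NormedAddCommGroup Z] [InnerProductSpace ℝ Z] [FiniteDimensional ℝ Z]

lemma exists_affine_minorant {h : Z → EReal}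
    (hconv : Convex ℝ {p : Z × ℝ | h p.1 ≤ (p.2:EReal)})
    (hbot : ∀ s, h s ≠ ⊥) {s0 : Z} {r0 : ℝ} (h0 : h s0 = (r0:EReal)) :
    ∃ (w : Z) (b : ℝ), ∀ s, ((⟪w, s⟫ - b : ℝ) : EReal) ≤ h s := by
  classical
  set C : Set (Z × ℝ) := {p | h p.1 ≤ (p.2:EReal)} with hCdef
  have hmemC : ∀ (s : Z) (r : ℝ), h s ≤ (r:EReal) → (s, r) ∈ C := fun s r hr => hr
  have hp0 : ((s0, r0) : Z × ℝ) ∈ C := hmemC _ _ (le_of_eq h0)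
  have hp1 : ((s0, r0 + 1) : Z × ℝ) ∈ C := by
    refine hmemC _ _ ?_
    rw [h0]; exact_mod_cast (by linarith : r0 ≤ r0 + 1)
  set p0 : Z × ℝ := (s0, r0) with hp0def
  set C' : Set (Z × ℝ) := (fun p => p - p0) '' C with hC'def
  have hC'conv : Convex ℝ C' := by
    have heq : (fun p : Z × ℝ => p - p0) = (fun p => -p0 + p) := by
      funext p; rw [sub_eq_neg_add]
    rw [hC'def, heq]
    exact hconv.translate (-p0)
  set V : Submodule ℝ (Z × ℝ) := Submodule.span ℝ C' with hVdef
  have hsub : C' ⊆ (V : Set (Z × ℝ)) := Submodule.subset_span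
  set C'' : Set V := (Subtype.val : V → Z × ℝ) ⁻¹' C' with hC''def
  have himg : Subtype.val '' C'' = C' := by
    rw [hC''def, Set.image_preimage_eq_iff.2]
    simpa using hsub
  have hC''conv : Convex ℝ C'' := hC'conv.linear_preimage V.subtype
  have hspan : Submodule.span ℝ C'' = ⊤ := by
    apply Submodule.map_injective_of_injective V.injective_subtype
    rw [Submodule.map_span, Submodule.map_subtype_top]
    show Submodule.span ℝ (Subtype.val '' C'') = V
    rw [himg]
  have h0C'' : (0 : V) ∈ C'' := by
    show ((0 : V) : Z × ℝ) ∈ C'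
    simp only [Submodule.coe_zero, hC'def]
    exact ⟨p0, hp0, sub_self p0⟩
  have haff : affineSpan ℝ C'' = ⊤ := by
    rw [AffineSubspace.affineSpan_eq_top_iff_vectorSpan_eq_top_of_nonempty ℝ V V ⟨0, h0C''⟩]
    rw [eq_top_iff, ← hspan, Submodule.span_le]
    intro v hv
    have hv2 : v -ᵥ (0:V) ∈ C'' -ᵥ C'' := Set.vsub_mem_vsub hv h0C''
    rw [vsub_eq_sub, sub_zero] at hv2
    exact vsub_set_subset_vectorSpan ℝ _ hv2
  obtain ⟨z'', hz''⟩ := (hC''conv.interior_nonempty_iff_affineSpan_eq_top).2 haff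
  set z : Z × ℝ := p0 + (z'' : Z × ℝ) with hzdef
  have hzC : z ∈ C := by
    have h5 : z'' ∈ C'' := interior_subset hz''
    have h6 : ((z'' : Z × ℝ)) ∈ C' := h5
    obtain ⟨q, hq, hq2⟩ := h6
    have hq2' : q - p0 = (z'' : Z × ℝ) := hq2
    have : z = q := by rw [hzdef, ← hq2']; abel
    rwa [this]
  set e : Z × ℝ := ((0:Z), (1:ℝ)) with hedef
  have heV : e ∈ V := by
    apply hsub
    refine ⟨(s0, r0 + 1), hp1, ?_⟩
    show (s0, r0 + 1) - p0 = e
    rw [hp0def, hedef, Prod.mk_sub_mk]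
    simp
  have hz''V : (z'' : Z × ℝ) ∈ V := z''.2
  have hzval : (z'' : Z × ℝ) = z - p0 := by rw [hzdef]; abel
  have hvert : ∀ c : ℝ, (z.1, z.2 - c) = z - c • e := by
    intro c
    rw [hedef, Prod.smul_mk]
    rw [show z = (z.1, z.2) from rfl]
    rw [Prod.mk_sub_mk]
    simp
  -- key claim
  have hkey : ∃ n : ℕ, (z.1, z.2 - (n+1)) ∉ closure C := by
    by_contra hcon
    push_neg at hcon
    have hbotz : h z.1 = ⊥ := by
      apply eq_bot_of_forall_le z.2
      intro n
      have hcl : (z.1, z.2 - (2*(n:ℝ)+1)) ∈ closure C := by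
        have h7 := hcon (2*n)
        convert h7 using 3
        push_cast; ring
      have hwV : (z.1, z.2 - (2*(n:ℝ)+1)) - p0 ∈ V := by
        rw [hvert]
        rw [show z - (2*(n:ℝ)+1) • e - p0 = (z - p0) - (2*(n:ℝ)+1) • e by abel]
        rw [← hzval]
        exact sub_mem hz''V (Submodule.smul_mem _ _ heV)
      set W : V := ⟨(z.1, z.2 - (2*(n:ℝ)+1)) - p0, hwV⟩ with hWdef
      have hWcl : W ∈ closure C'' := by
        have h1' : ((z.1, z.2 - (2*(n:ℝ)+1)) - p0) ∈ closure C' :=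
          map_mem_closure (f := fun p => p - p0) (continuous_id.sub continuous_const) hcl
            (fun x hx => Set.mem_image_of_mem _ hx)
        have h1 : ((W : Z × ℝ)) ∈ closure C' := h1'
        obtain ⟨q, hq, hql⟩ := mem_closure_iff_seq_limit.1 h1
        have htd : Filter.Tendsto (fun k => (⟨q k, hsub (hq k)⟩ : V)) Filter.atTop (nhds W) := by
          rw [Topology.IsInducing.subtypeVal.tendsto_nhds_iff]
          exact hql
        exact mem_closure_of_tendsto htd
          (Filter.Eventually.of_forall (fun k => show q k ∈ C' from hq k))
      have hmid : ((1:ℝ)/2) • z'' + ((1:ℝ)/2) • W ∈ C'' := by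
        apply interior_subset
        apply hC''conv.openSegment_interior_closure_subset_interior hz'' hWcl
        exact ⟨1/2, 1/2, by norm_num, by norm_num, by norm_num, rfl⟩
      have hmC : p0 + ((((1:ℝ)/2) • z'' + ((1:ℝ)/2) • W : V) : Z × ℝ) ∈ C := by
        obtain ⟨q, hq, hq2⟩ := hmid
        have hq2' : q - p0 = ((((1:ℝ)/2) • z'' + ((1:ℝ)/2) • W : V) : Z × ℝ) := hq2
        have heq2 : p0 + ((((1:ℝ)/2) • z'' + ((1:ℝ)/2) • W : V) : Z × ℝ) = q := by
          rw [← hq2']; abel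
        rwa [heq2]
      have hval : ((((1:ℝ)/2) • z'' + ((1:ℝ)/2) • W : V) : Z × ℝ)
          = ((1:ℝ)/2) • (z - p0) + ((1:ℝ)/2) • ((z - (2*(n:ℝ)+1) • e) - p0) := by
        push_cast
        rw [hzval]
        show _ + _ • ((z.1, z.2 - (2*(n:ℝ)+1)) - p0 : Z × ℝ) = _
        rw [hvert]

      have hcoord : p0 + ((((1:ℝ)/2) • z'' + ((1:ℝ)/2) • W : V) : Z × ℝ)
          = (z.1, z.2 - ((2*(n:ℝ)+1)/2)) := by
        rw [hval, hvert]
        match_scalars <;> ring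
      rw [hcoord] at hmC
      have h1 : h z.1 ≤ ((z.2 - (2*(n:ℝ)+1)/2 : ℝ) : EReal) := hmC
      refine h1.trans ?_
      apply EReal.coe_le_coe_iff.2
      push_cast; linarith
    exact hbot z.1 hbotz
  obtain ⟨n, hn⟩ := hkey
  obtain ⟨φ, u, hu1, hu2⟩ :=
    geometric_hahn_banach_point_closed (hconv.closure) isClosed_closure hn
  set a : ℝ := φ e with hadef
  have hdec : ∀ (s : Z) (r c : ℝ), φ (s, r + c) = φ (s, r) + c * a := by
    intro s r c
    have hsum : ((s, r + c) : Z × ℝ) = (s, r) + c • e := by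
      rw [hedef, Prod.smul_mk, Prod.mk_add_mk]
      simp
    rw [hsum, map_add, map_smul, smul_eq_mul]
  have hza : u < φ (z.1, z.2) := hu2 _ (subset_closure hzC)
  have ha : 0 < a := by
    have h2 : φ (z.1, z.2) = φ (z.1, z.2 - ((n:ℝ)+1)) + ((n:ℝ)+1) * a := by
      have h8 := hdec z.1 (z.2 - ((n:ℝ)+1)) ((n:ℝ)+1)
      rw [sub_add_cancel] at h8
      exact h8
    have h3 : φ (z.1, z.2 - ((n:ℝ)+1)) < u := hu1
    nlinarith [Nat.cast_nonneg (α := ℝ) n]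
  haveI : CompleteSpace Z := FiniteDimensional.complete ℝ Z
  set ψ : Z →L[ℝ] ℝ := φ.comp (ContinuousLinearMap.inl ℝ Z ℝ) with hψdef
  set w : Z := (InnerProductSpace.toDual ℝ Z).symm (-(a⁻¹) • ψ) with hwdef
  have hw : ∀ s : Z, ⟪w, s⟫ = -(a⁻¹) * φ (s, 0) := by
    intro s
    rw [hwdef, InnerProductSpace.toDual_symm_apply]
    rfl
  refine ⟨w, -(u/a), fun s => ?_⟩
  rcases eq_or_ne (h s) ⊤ with hTop | hTop
  · rw [hTop]; exact le_top
  obtain ⟨r, hr⟩ := exists_real_eq (hbot s) hTop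
  have hsC : ((s, r) : Z × ℝ) ∈ C := hmemC _ _ (le_of_eq hr)
  have h4 : u < φ (s, 0) + r * a := by
    have h9 := hu2 _ (subset_closure hsC)
    have h5 := hdec s 0 r
    rw [zero_add] at h5
    rw [h5] at h9
    exact h9
  rw [hr]
  apply EReal.coe_le_coe_iff.2
  rw [hw s, sub_neg_eq_add]
  have ha' : a ≠ 0 := ne_of_gt ha
  have h6 : u * a⁻¹ < (φ (s, 0) + r * a) * a⁻¹ :=
    mul_lt_mul_of_pos_right h4 (inv_pos.2 ha)
  rw [add_mul, mul_assoc, mul_inv_cancel₀ ha', mul_one] at h6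
  have : u / a = u * a⁻¹ := div_eq_mul_inv u a
  linarith

-- ## EReal helpers

lemma coe_sub_top' (c : ℝ) : (c:EReal) - ⊤ = ⊥ := by
  rw [sub_eq_add_neg]; simp

lemma csub_anti {c : ℝ} {x y : EReal} (h : x ≤ y) : (c:EReal) - y ≤ (c:EReal) - x :=
  EReal.sub_le_sub le_rfl h

lemma csub_csub (c : ℝ) (x : EReal) : (c:EReal) - ((c:EReal) - x) = x := by
  induction x using EReal.rec with
  | bot => rw [EReal.coe_sub_bot, coe_sub_top']
  | coe r => rw [← EReal.coe_sub, ← EReal.coe_sub]; norm_num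
  | top => rw [coe_sub_top', EReal.coe_sub_bot]

lemma csub_le_iff {c : ℝ} {x h : EReal} (hcx : (c:EReal) - h ≤ x) : (c:EReal) - x ≤ h := by
  have := csub_anti (c := c) hcx
  rwa [csub_csub] at this

lemma le_of_forall_lt_coe {x y : EReal} (h : ∀ r:ℝ, (r:EReal) < x → (r:EReal) ≤ y) : x ≤ y := by
  by_contra hc
  push_neg at hc
  obtain ⟨r, hyr, hrx⟩ := EReal.exists_between_coe_real hc
  exact absurd (h r hrx) (not_le.2 hyr)

lemma le_coe_of_forall_le_add {x : EReal} {c : ℝ} (h : ∀ ε:ℝ, 0 < ε → x ≤ ((c + ε:ℝ):EReal)) :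
    x ≤ (c:EReal) := by
  by_contra hc
  push_neg at hc
  obtain ⟨r, hyr, hrx⟩ := EReal.exists_between_coe_real hc
  have h1 := (h (r - c) (by rw [EReal.coe_lt_coe_iff] at hyr; linarith))
  rw [show c + (r - c) = r by ring] at h1
  exact absurd h1 (not_le.2 hrx)

-- ## Conjugate function helpers (matching the `econj` definition below)

noncomputable def econjZ (h : Z → EReal) (l : Z) : EReal := ⨆ s : Z, (⟪l, s⟫ : EReal) - h s

lemma le_econjZ (h : Z → EReal) (l s : Z) : (⟪l, s⟫ : EReal) - h s ≤ econjZ h l :=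
  le_iSup (fun s' => (⟪l, s'⟫ : EReal) - h s') s

lemma econjZ_le {h : Z → EReal} {l : Z} {b : ℝ} (hbot : ∀ s, h s ≠ ⊥)
    (hmin : ∀ (s : Z) (r : ℝ), h s = (r:EReal) → ⟪l, s⟫ - b ≤ r) :
    econjZ h l ≤ (b:EReal) := by
  apply iSup_le
  intro s
  rcases eq_or_ne (h s) ⊤ with hT | hT
  · rw [hT, coe_sub_top']
    exact bot_le
  obtain ⟨r, hr⟩ := exists_real_eq (hbot s) hT
  rw [hr, ← EReal.coe_sub, EReal.coe_le_coe_iff]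
  linarith [hmin s r hr]

lemma biconjZ_le (h : Z → EReal) (s : Z) : econjZ (econjZ h) s ≤ h s := by
  apply iSup_le
  intro l
  apply csub_le_iff
  have h2 := le_econjZ h l s
  rwa [← real_inner_comm s l]

lemma econjZ_lsc (h : Z → EReal) : LowerSemicontinuous (econjZ h) := by
  apply lowerSemicontinuous_iSup
  intro s
  rcases eq_or_ne (h s) ⊤ with hT | hT
  · have heq : (fun l : Z => (⟪l, s⟫ : EReal) - h s) = fun _ => (⊥ : EReal) := by
      funext l; rw [hT, coe_sub_top']
    rw [heq]
    exact lowerSemicontinuous_const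
  rcases eq_or_ne (h s) ⊥ with hB | hB
  · have heq : (fun l : Z => (⟪l, s⟫ : EReal) - h s) = fun _ => (⊤ : EReal) := by
      funext l; rw [hB, EReal.coe_sub_bot]
    rw [heq]
    exact lowerSemicontinuous_const
  obtain ⟨r, hr⟩ := exists_real_eq hB hT
  have heq : (fun l : Z => (⟪l, s⟫ : EReal) - h s) = fun l => ((⟪l, s⟫ - r : ℝ) : EReal) := by
    funext l; rw [hr, ← EReal.coe_sub]
  rw [heq]
  apply Continuous.lowerSemicontinuous
  exact continuous_coe_real_ereal.comp ((continuous_id.inner continuous_const).sub continuous_const)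

lemma econjZ_convex (h : Z → EReal) : Convex ℝ {p : Z × ℝ | econjZ h p.1 ≤ (p.2:EReal)} := by
  have hset : {p : Z × ℝ | econjZ h p.1 ≤ (p.2:EReal)} =
      ⋂ s, {p : Z × ℝ | (⟪p.1, s⟫:EReal) - h s ≤ (p.2:EReal)} := by
    ext p
    simp only [Set.mem_setOf_eq, Set.mem_iInter, econjZ, iSup_le_iff]
  rw [hset]
  apply convex_iInter
  intro s
  rcases eq_or_ne (h s) ⊤ with hT | hT
  · have : {p : Z × ℝ | (⟪p.1, s⟫:EReal) - h s ≤ (p.2:EReal)} = Set.univ := by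
      ext p; simp only [Set.mem_setOf_eq, Set.mem_univ, iff_true, hT, coe_sub_top']
      exact bot_le
    rw [this]; exact convex_univ
  rcases eq_or_ne (h s) ⊥ with hB | hB
  · have : {p : Z × ℝ | (⟪p.1, s⟫:EReal) - h s ≤ (p.2:EReal)} = ∅ := by
      ext p
      simp only [Set.mem_setOf_eq, Set.mem_empty_iff_false, iff_false, hB, EReal.coe_sub_bot]
      exact fun hp => (EReal.coe_lt_top p.2).not_ge hp
    rw [this]; exact convex_empty
  obtain ⟨r, hr⟩ := exists_real_eq hB hT
  have hseteq : {p : Z × ℝ | (⟪p.1, s⟫:EReal) - h s ≤ (p.2:EReal)} =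
      (fun p : Z × ℝ => ⟪p.1, s⟫ - p.2) ⁻¹' Set.Iic r := by
    ext p
    simp only [Set.mem_setOf_eq, Set.mem_preimage, Set.mem_Iic, hr, ← EReal.coe_sub,
      EReal.coe_le_coe_iff]
    constructor <;> intro <;> linarith
  rw [hseteq]
  refine (convex_Iic r).is_linear_preimage ⟨fun p q => ?_, fun c p => ?_⟩
  · simp only [Prod.fst_add, Prod.snd_add, inner_add_left]
    ring
  · simp only [Prod.smul_fst, Prod.smul_snd, real_inner_smul_left, smul_eq_mul]
    ring

-- ## Lower semicontinuity and the closed epigraph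

lemma isClosed_epi {h : Z → EReal} (hlsc : LowerSemicontinuous h) :
    IsClosed {p : Z × ℝ | h p.1 ≤ (p.2:EReal)} := by
  rw [← isOpen_compl_iff, isOpen_iff_mem_nhds]
  rintro ⟨x, t⟩ hp
  simp only [Set.mem_compl_iff, Set.mem_setOf_eq, not_le] at hp
  obtain ⟨y, hy1, hy2⟩ := EReal.exists_between_coe_real hp
  have h1 : ∀ᶠ x' in nhds x, (y:EReal) < h x' := hlsc x (y:EReal) hy2
  have h2 : Set.Iio y ∈ nhds t := Iio_mem_nhds (EReal.coe_lt_coe_iff.1 hy1)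
  rw [nhds_prod_eq]
  filter_upwards [Filter.prod_mem_prod h1 h2] with p hp'
  simp only [Set.mem_compl_iff, Set.mem_setOf_eq, not_le]
  exact lt_trans (EReal.coe_lt_coe_iff.2 hp'.2) hp'.1

-- ## Fenchel–Moreau

lemma le_biconjZ {h : Z → EReal}
    (hconv : Convex ℝ {p : Z × ℝ | h p.1 ≤ (p.2:EReal)})
    (hbot : ∀ s, h s ≠ ⊥) {s0 : Z} {r0 : ℝ} (h0 : h s0 = (r0:EReal))
    (hlsc : LowerSemicontinuous h) (s : Z) :
    h s ≤ econjZ (econjZ h) s := by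
  classical
  haveI : CompleteSpace Z := FiniteDimensional.complete ℝ Z
  apply le_of_forall_lt_coe
  intro r hr
  set C : Set (Z × ℝ) := {p | h p.1 ≤ (p.2:EReal)} with hCdef
  have hCclosed : IsClosed C := isClosed_epi hlsc
  have hmemC : ∀ (s' : Z) (r' : ℝ), h s' ≤ (r':EReal) → (s', r') ∈ C := fun s' r' hr' => hr'
  have hsr : ((s, r) : Z × ℝ) ∉ C := by
    simp only [hCdef, Set.mem_setOf_eq, not_le]
    exact hr
  obtain ⟨φ, u, hu1, hu2⟩ := geometric_hahn_banach_point_closed hconv hCclosed hsr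
  set e : Z × ℝ := ((0:Z), (1:ℝ)) with hedef
  set a : ℝ := φ e with hadef
  have hdec : ∀ (s' : Z) (r' c : ℝ), φ (s', r' + c) = φ (s', r') + c * a := by
    intro s' r' c
    have hsum : ((s', r' + c) : Z × ℝ) = (s', r') + c • e := by
      rw [hedef, Prod.smul_mk, Prod.mk_add_mk]
      simp
    rw [hsum, map_add, map_smul, smul_eq_mul]
  have hC0 : ((s0, r0) : Z × ℝ) ∈ C := hmemC _ _ (le_of_eq h0)
  have ha : 0 ≤ a := by
    by_contra hneg
    push_neg at hneg
    set t : ℝ := (u - φ (s0, r0)) / a with htdef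
    have hts : 0 < t := div_pos_of_neg_of_neg (by linarith [hu2 _ hC0]) hneg
    have hC1 : ((s0, r0 + t) : Z × ℝ) ∈ C := by
      refine hmemC _ _ ?_
      rw [h0]
      exact EReal.coe_le_coe_iff.2 (by linarith)
    have h5 := hu2 _ hC1
    rw [hdec, htdef, div_mul_cancel₀ _ (ne_of_lt hneg)] at h5
    linarith
  set ψ : Z →L[ℝ] ℝ := φ.comp (ContinuousLinearMap.inl ℝ Z ℝ) with hψdef
  obtain ⟨w0, b0, hmin⟩ := exists_affine_minorant hconv hbot h0
  have hminR : ∀ (s' : Z) (r' : ℝ), h s' = (r':EReal) → ⟪w0, s'⟫ - b0 ≤ r' := by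
    intro s' r' hr'
    have := hmin s'
    rw [hr', EReal.coe_le_coe_iff] at this
    linarith
  rcases lt_or_eq_of_le ha with hapos | ha0
  · -- a > 0
    set w : Z := (InnerProductSpace.toDual ℝ Z).symm (-(a⁻¹) • ψ) with hwdef
    have hw : ∀ s' : Z, ⟪w, s'⟫ = -(a⁻¹) * φ (s', 0) := by
      intro s'
      rw [hwdef, InnerProductSpace.toDual_symm_apply]
      rfl
    have ha' : a ≠ 0 := ne_of_gt hapos
    have hconj : econjZ h w ≤ ((-(u/a) : ℝ):EReal) := by
      refine econjZ_le hbot ?_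
      intro s' r' hr'
      have h9 := hu2 _ (hmemC _ _ (le_of_eq hr'))
      have h5 := hdec s' 0 r'
      rw [zero_add] at h5
      rw [h5] at h9
      rw [hw s']
      have h6 : u * a⁻¹ < (φ (s', 0) + r' * a) * a⁻¹ :=
        mul_lt_mul_of_pos_right h9 (inv_pos.2 hapos)
      rw [add_mul, mul_assoc, mul_inv_cancel₀ ha', mul_one] at h6
      have hd : u / a = u * a⁻¹ := div_eq_mul_inv u a
      linarith
    have hru : r < ⟪s, w⟫ - (-(u/a)) := by
      have h5 := hdec s 0 r
      rw [zero_add] at h5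
      rw [h5] at hu1
      rw [real_inner_comm, hw s]
      have h6 : (φ (s, 0) + r * a) * a⁻¹ < u * a⁻¹ :=
        mul_lt_mul_of_pos_right hu1 (inv_pos.2 hapos)
      rw [add_mul, mul_assoc, mul_inv_cancel₀ ha', mul_one] at h6
      have hd : u / a = u * a⁻¹ := div_eq_mul_inv u a
      linarith
    calc (r : EReal) ≤ ((⟪s, w⟫ - (-(u/a)) : ℝ) : EReal) := EReal.coe_le_coe_iff.2 hru.le
    _ = (⟪s, w⟫ : EReal) - ((-(u/a) : ℝ) : EReal) := by rw [EReal.coe_sub]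
    _ ≤ (⟪s, w⟫ : EReal) - econjZ h w := csub_anti hconj
    _ ≤ econjZ (econjZ h) s := le_econjZ _ _ _
  · -- a = 0
    have hphi : ∀ (s' : Z) (r' : ℝ), φ (s', r') = φ (s', 0) := by
      intro s' r'
      have h5 := hdec s' 0 r'
      rw [zero_add, ← ha0, mul_zero, add_zero] at h5
      exact h5
    set v : Z := (InnerProductSpace.toDual ℝ Z).symm ψ with hvdef
    have hv : ∀ s' : Z, ⟪v, s'⟫ = φ (s', 0) := by
      intro s'
      rw [hvdef, InnerProductSpace.toDual_symm_apply]
      rfl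
    have hslt : φ (s, 0) < u := by rw [← hphi s r]; exact hu1
    have hdompos : ∀ (s' : Z) (r' : ℝ), h s' = (r':EReal) → u < φ (s', 0) := by
      intro s' r' hr'
      rw [← hphi s' r']
      exact hu2 _ (hmemC _ _ (le_of_eq hr'))
    set δ : ℝ := u - φ (s, 0) with hδdef
    have hδpos : 0 < δ := by rw [hδdef]; linarith
    obtain ⟨n, hn⟩ := exists_nat_gt ((r - (⟪w0, s⟫ - b0)) / δ)
    set l : Z := w0 - (n:ℝ) • v with hldef
    have hl : ∀ s' : Z, ⟪l, s'⟫ = ⟪w0, s'⟫ - (n:ℝ) * φ (s', 0) := by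
      intro s'
      rw [hldef, inner_sub_left, real_inner_smul_left, hv s']
    have hconj : econjZ h l ≤ ((b0 - n * u : ℝ):EReal) := by
      refine econjZ_le hbot ?_
      intro s' r' hr'
      rw [hl s']
      have h6 := hminR s' r' hr'
      have h7 := hdompos s' r' hr'
      nlinarith [Nat.cast_nonneg (α := ℝ) n]
    have hru : r ≤ ⟪s, l⟫ - (b0 - n * u) := by
      rw [real_inner_comm, hl s]
      have h8 : r - (⟪w0, s⟫ - b0) < n * δ := by
        have h9 := (div_lt_iff₀ hδpos).1 hn
        linarith
      rw [hδdef] at h8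
      linarith
    calc (r : EReal) ≤ ((⟪s, l⟫ - (b0 - n * u) : ℝ) : EReal) := EReal.coe_le_coe_iff.2 hru
    _ = (⟪s, l⟫ : EReal) - ((b0 - n * u : ℝ) : EReal) := by rw [EReal.coe_sub]
    _ ≤ (⟪s, l⟫ : EReal) - econjZ h l := csub_anti hconj
    _ ≤ econjZ (econjZ h) s := le_econjZ _ _ _


lemma ne_bot_of_coe_le {c : ℝ} {x : EReal} (h : (c:EReal) ≤ x) : x ≠ ⊥ := by
  intro hb
  rw [hb] at h
  exact (EReal.bot_lt_coe c).not_ge h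

lemma ne_top_of_le_coe {c : ℝ} {x : EReal} (h : x ≤ (c:EReal)) : x ≠ ⊤ := by
  intro hb
  rw [hb] at h
  exact (EReal.coe_lt_top c).not_ge h

lemma csub_sInf (c : ℝ) (D : Set EReal) :
    (c:EReal) - sInf D = sSup ((fun x => (c:EReal) - x) '' D) := by
  apply le_antisymm
  · have h1 : (c:EReal) - sSup ((fun x => (c:EReal) - x) '' D) ≤ sInf D := by
      apply le_sInf
      intro d hd
      have h2 : (c:EReal) - d ≤ sSup ((fun x => (c:EReal) - x) '' D) :=
        le_sSup (Set.mem_image_of_mem _ hd)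
      have h3 := csub_anti (c := c) h2
      rwa [csub_csub] at h3
    have h4 := csub_anti (c := c) h1
    rwa [csub_csub] at h4
  · apply sSup_le
    rintro _ ⟨d, hd, rfl⟩
    exact csub_anti (sInf_le hd)

end PfAux

section GlueLemmas

variable {E : Type*} [NormedAddCommGroup E] [InnerProductSpace ℝ E]
variable {Y : Type*} [NormedAddCommGroup Y] [InnerProductSpace ℝ Y]

lemma neg_lagr (f : E → ℝ) (g : E → Y) (x : E) (y : Y) (l : Y) :
    ((lagr f g x y l : ℝ) : EReal) = -((⟪l, y - g x⟫ - f x : ℝ) : EReal) := by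
  rw [← EReal.coe_neg]
  norm_cast
  unfold lagr
  rw [inner_sub_right, inner_sub_right]
  ring

lemma dualFn_eq_sSup (f : E → ℝ) (g : E → Y) (K : Set Y) (l : Y) :
    dualFn f g K l = sSup ((fun p : E × Y => ((⟪l, p.2 - g p.1⟫ - f p.1 : ℝ) : EReal)) ''
      {p : E × Y | p.2 ∈ K}) := by
  unfold dualFn
  apply le_antisymm
  · rw [EReal.neg_le]
    apply le_sInf
    rintro _ ⟨p, hp, rfl⟩
    beta_reduce
    rw [neg_lagr, EReal.neg_le_neg_iff]
    exact le_sSup (Set.mem_image_of_mem _ hp)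
  · apply sSup_le
    rintro _ ⟨p, hp, rfl⟩
    have h1 : sInf ((fun p : E × Y => ((lagr f g p.1 p.2 l : ℝ) : EReal)) ''
        {p : E × Y | p.2 ∈ K}) ≤ ((lagr f g p.1 p.2 l : ℝ) : EReal) :=
      sInf_le (Set.mem_image_of_mem _ hp)
    have h2 := EReal.neg_le_neg_iff.2 h1
    rwa [neg_lagr, neg_neg] at h2

lemma econj_valFn_eq_sSup (f : E → ℝ) (g : E → Y) (K : Set Y) (l : Y) :
    econj (valFn f g K) l = sSup ((fun p : E × Y => ((⟪l, p.2 - g p.1⟫ - f p.1 : ℝ) : EReal)) ''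
      {p : E × Y | p.2 ∈ K}) := by
  apply le_antisymm
  · apply iSup_le
    intro s
    rw [valFn, PfAux.csub_sInf]
    apply sSup_le
    rintro _ ⟨_, ⟨x, hx, rfl⟩, rfl⟩
    beta_reduce
    rw [← EReal.coe_sub]
    apply le_sSup
    refine ⟨(x, g x + s), hx, ?_⟩
    simp only [add_sub_cancel_left]
  · apply sSup_le
    rintro _ ⟨⟨x, y⟩, hp, rfl⟩
    have hfeas : x ∈ {x' | g x' + (y - g x) ∈ K} := by
      simp only [Set.mem_setOf_eq, add_sub_cancel]
      exact hp
    have h1 : valFn f g K (y - g x) ≤ ((f x : ℝ) : EReal) :=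
      sInf_le (Set.mem_image_of_mem _ hfeas)
    calc ((⟪l, y - g x⟫ - f x : ℝ) : EReal)
        = (⟪l, y - g x⟫ : EReal) - ((f x : ℝ) : EReal) := by rw [EReal.coe_sub]
      _ ≤ (⟪l, y - g x⟫ : EReal) - valFn f g K (y - g x) := PfAux.csub_anti h1
      _ ≤ econj (valFn f g K) l :=
          le_iSup (fun s => (⟪l, s⟫ : EReal) - valFn f g K s) (y - g x)

lemma valFn_convex (f : E → ℝ) (g : E → Y) (K : Set Y) (hfconv : ConvexOn ℝ Set.univ f)
    (hgraph : Convex ℝ (gphGK g K)) :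
    Convex ℝ {p : Y × ℝ | valFn f g K p.1 ≤ (p.2 : EReal)} := by
  rintro p hp q hq a b ha hb hab
  simp only [Set.mem_setOf_eq] at hp hq ⊢
  show valFn f g K (a • p.1 + b • q.1) ≤ ((a * p.2 + b * q.2 : ℝ) : EReal)
  apply PfAux.le_coe_of_forall_le_add
  intro ε hε
  have hp' : valFn f g K p.1 < ((p.2 + ε : ℝ) : EReal) :=
    lt_of_le_of_lt hp (EReal.coe_lt_coe_iff.2 (by linarith))
  have hq' : valFn f g K q.1 < ((q.2 + ε : ℝ) : EReal) :=
    lt_of_le_of_lt hq (EReal.coe_lt_coe_iff.2 (by linarith))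
  rw [valFn] at hp' hq'
  obtain ⟨_, ⟨x1, hx1, rfl⟩, hx1lt⟩ := sInf_lt_iff.1 hp'
  obtain ⟨_, ⟨x2, hx2, rfl⟩, hx2lt⟩ := sInf_lt_iff.1 hq'
  rw [EReal.coe_lt_coe_iff] at hx1lt hx2lt
  have hfeas : (a • x1 + b • x2, a • p.1 + b • q.1) ∈ gphGK g K :=
    hgraph (show ((x1, p.1) : E × Y) ∈ gphGK g K from hx1)
      (show ((x2, q.1) : E × Y) ∈ gphGK g K from hx2) ha hb hab
  have hval : valFn f g K (a • p.1 + b • q.1) ≤ ((f (a • x1 + b • x2) : ℝ) : EReal) :=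
    sInf_le (Set.mem_image_of_mem _ hfeas)
  have hfle : f (a • x1 + b • x2) ≤ a * f x1 + b * f x2 :=
    hfconv.2 (Set.mem_univ x1) (Set.mem_univ x2) ha hb hab
  refine hval.trans (EReal.coe_le_coe_iff.2 ?_)
  nlinarith

end GlueLemmas

/-- Proposition 3.2: (a) `θ = ν*` and `ν** = θ*`; (b) if `ν` is proper
then `θ` and `ν**` are proper lsc convex; (c) if `ν` is proper and lsc then
`ν = ν** = θ*`. -/
theorem dualFn_eq_conj_valFn {n : ℕ} {Y : Type*} [NormedAddCommGroup Y]
    [InnerProductSpace ℝ Y] [FiniteDimensional ℝ Y]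
    (f : EuclideanSpace ℝ (Fin n) → ℝ) (g : EuclideanSpace ℝ (Fin n) → Y) (K : Set Y)
    (hfconv : ConvexOn ℝ Set.univ f)
    (hKne : K.Nonempty) (hKclosed : IsClosed K) (hKconv : Convex ℝ K)
    (hgraph : Convex ℝ (gphGK g K)) :
    -- (a)
    ((∀ l, dualFn f g K l = econj (valFn f g K) l) ∧
      (∀ s, econj (econj (valFn f g K)) s = econj (dualFn f g K) s)) ∧
    -- (b)
    (ERealProper (valFn f g K) →
      (ERealProper (dualFn f g K) ∧ LowerSemicontinuous (dualFn f g K) ∧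
        ERealConvexOn (dualFn f g K)) ∧
      (ERealProper (econj (econj (valFn f g K))) ∧
        LowerSemicontinuous (econj (econj (valFn f g K))) ∧
        ERealConvexOn (econj (econj (valFn f g K))))) ∧
    -- (c)
    (ERealProper (valFn f g K) → LowerSemicontinuous (valFn f g K) →
      ∀ s, valFn f g K s = econj (econj (valFn f g K)) s ∧
        valFn f g K s = econj (dualFn f g K) s) := by
  classical
  have ha1 : ∀ l, dualFn f g K l = econj (valFn f g K) l := fun l => by
    rw [dualFn_eq_sSup, econj_valFn_eq_sSup]
  have hthfun : dualFn f g K = econj (valFn f g K) := funext ha1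
  have ha2 : ∀ s, econj (econj (valFn f g K)) s = econj (dualFn f g K) s := fun s => by
    rw [hthfun]
  have hZ1 : econj (valFn f g K) = PfAux.econjZ (valFn f g K) := rfl
  have hZ2 : econj (econj (valFn f g K)) = PfAux.econjZ (PfAux.econjZ (valFn f g K)) := rfl
  refine ⟨⟨ha1, ha2⟩, ?_, ?_⟩
  · -- part (b)
    rintro ⟨hbot, sh, hsh⟩
    obtain ⟨rh, hrh⟩ := PfAux.exists_real_eq (hbot sh) hsh
    have hnuconv : Convex ℝ {p : Y × ℝ | valFn f g K p.1 ≤ (p.2 : EReal)} :=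
      valFn_convex f g K hfconv hgraph
    obtain ⟨w, b, hmin⟩ := PfAux.exists_affine_minorant hnuconv hbot hrh
    have hminR : ∀ (s : Y) (r : ℝ), valFn f g K s = (r : EReal) → ⟪w, s⟫ - b ≤ r := by
      intro s r hr
      have h1 := hmin s
      rw [hr, EReal.coe_le_coe_iff] at h1
      linarith
    have hconjb : PfAux.econjZ (valFn f g K) w ≤ (b : EReal) := PfAux.econjZ_le hbot hminR
    have hlow : ∀ l : Y, ((⟪l, sh⟫ - rh : ℝ) : EReal) ≤ econj (valFn f g K) l := by
      intro l
      rw [EReal.coe_sub]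
      calc (⟪l, sh⟫ : EReal) - (rh : EReal) = (⟪l, sh⟫ : EReal) - valFn f g K sh := by rw [hrh]
        _ ≤ econj (valFn f g K) l := le_iSup (fun s => (⟪l, s⟫ : EReal) - valFn f g K s) sh
    constructor
    · refine ⟨⟨fun l => ?_, ⟨w, ?_⟩⟩, ?_, ?_⟩
      · rw [ha1 l]
        exact PfAux.ne_bot_of_coe_le (hlow l)
      · rw [ha1 w, hZ1]
        exact PfAux.ne_top_of_le_coe hconjb
      · rw [hthfun, hZ1]
        exact PfAux.econjZ_lsc _
      · show Convex ℝ {p : Y × ℝ | dualFn f g K p.1 ≤ (p.2 : EReal)}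
        rw [hthfun, hZ1]
        exact PfAux.econjZ_convex _
    · refine ⟨⟨fun s => ?_, ⟨sh, ?_⟩⟩, ?_, ?_⟩
      · rw [hZ2]
        apply PfAux.ne_bot_of_coe_le (c := ⟪s, w⟫ - b)
        rw [EReal.coe_sub]
        calc (⟪s, w⟫ : EReal) - (b : EReal)
            ≤ (⟪s, w⟫ : EReal) - PfAux.econjZ (valFn f g K) w := PfAux.csub_anti hconjb
          _ ≤ PfAux.econjZ (PfAux.econjZ (valFn f g K)) s := PfAux.le_econjZ _ _ _
      · rw [hZ2]
        apply PfAux.ne_top_of_le_coe (c := rh)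
        calc PfAux.econjZ (PfAux.econjZ (valFn f g K)) sh ≤ valFn f g K sh :=
              PfAux.biconjZ_le _ _
          _ = (rh : EReal) := hrh
      · rw [hZ2]
        exact PfAux.econjZ_lsc _
      · show Convex ℝ {p : Y × ℝ | econj (econj (valFn f g K)) p.1 ≤ (p.2 : EReal)}
        rw [hZ2]
        exact PfAux.econjZ_convex _
  · -- part (c)
    rintro ⟨hbot, sh, hsh⟩ hlsc s
    obtain ⟨rh, hrh⟩ := PfAux.exists_real_eq (hbot sh) hsh
    have hnuconv : Convex ℝ {p : Y × ℝ | valFn f g K p.1 ≤ (p.2 : EReal)} :=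
      valFn_convex f g K hfconv hgraph
    have h1 : valFn f g K s = econj (econj (valFn f g K)) s := by
      rw [hZ2]
      exact le_antisymm (PfAux.le_biconjZ hnuconv hbot hrh hlsc s) (PfAux.biconjZ_le _ s)
    exact ⟨h1, h1.trans (ha2 s)⟩
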